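/- If two ω-regular languages (languages recognized by nondeterministic Büchi automata) contain the same ultimately periodic words, then they are equal. -/

import Mathlib

/-- Concatenation of a finite word `u` with an ω-word `w`. -/
def finCat {α : Type*} (u : List α) (w : ℕ → α) : ℕ → α :=
  fun n => if h : n < u.length then u.get ⟨n, h⟩ else w (n - u.length)

/-- The ω-word `v^ω`, the infinite repetition of a nonempty finite word `v`. -/
def repWord {α : Type*} (v : List α) (h : 0 < v.length) : ℕ → α :=
  fun n => v.get ⟨n % v.length, Nat.mod_lt n h⟩

/-- `u · v^ω ∈ L` (this requires `v` to be nonempty). -/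
def OmegaIn {α : Type*} (L : Set (ℕ → α)) (u v : List α) : Prop :=
  ∃ h : 0 < v.length, finCat u (repWord v h) ∈ L

/-- The leading right congruence `u₁ ∼ u₂`. -/
def Leading {α : Type*} (L : Set (ℕ → α)) (u₁ u₂ : List α) : Prop :=
  ∀ w : ℕ → α, finCat u₁ w ∈ L ↔ finCat u₂ w ∈ L

/-- The limit progress relation `x ≈ᵘ_L y`. -/
def LimitRel {α : Type*} (L : Set (ℕ → α)) (u x y : List α) : Prop :=
  ∀ v : List α,
    (Leading L (u ++ x ++ v) u → OmegaIn L u (x ++ v)) ↔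
    (Leading L (u ++ y ++ v) u → OmegaIn L u (y ++ v))

/-- The syntactic progress relation `x ≈ᵘ_S y`. -/
def SynRel {α : Type*} (L : Set (ℕ → α)) (u x y : List α) : Prop :=
  Leading L (u ++ x) (u ++ y) ∧
  ∀ v : List α, Leading L (u ++ x ++ v) u →
    (OmegaIn L u (x ++ v) ↔ OmegaIn L u (y ++ v))

/-- The periodic progress relation `x ≈ᵘ_P y`. -/
def PerRel {α : Type*} (L : Set (ℕ → α)) (u x y : List α) : Prop :=
  ∀ v : List α, OmegaIn L u (x ++ v) ↔ OmegaIn L u (y ++ v)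

/-- The recurrent progress relation `x ≈ᵘ_R y`. -/
def RecRel {α : Type*} (L : Set (ℕ → α)) (u x y : List α) : Prop :=
  ∀ v : List α,
    (Leading L (u ++ x ++ v) u ∧ OmegaIn L u (x ++ v)) ↔
    (Leading L (u ++ y ++ v) u ∧ OmegaIn L u (y ++ v))

/-- The progress right pro-congruence `x ≈ᵘ_N y`. -/
def ProRel {α : Type*} (L : Set (ℕ → α)) (u x y : List α) : Prop :=
  ∀ v : List α,
    (Leading L (u ++ x ++ v) u ∧ Leading L (u ++ y ++ v) u) →
    (OmegaIn L u (x ++ v) ↔ OmegaIn L u (y ++ v))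

/-- A nondeterministic Büchi automaton with transition-based acceptance. -/
structure NBA (α : Type*) where
  Q : Type
  fin : Fintype Q
  init : Q
  trans : Q → α → Set Q
  acc : Set (Q × α × Q)

/-- An ω-word is accepted by an NBA if some run visits accepting transitions infinitely often. -/
def NBA.Accepts {α : Type*} (A : NBA α) (w : ℕ → α) : Prop :=
  ∃ ρ : ℕ → A.Q, ρ 0 = A.init ∧ (∀ n, ρ (n + 1) ∈ A.trans (ρ n) (w n)) ∧
    ∀ N : ℕ, ∃ n, N ≤ n ∧ (ρ n, w n, ρ (n + 1)) ∈ A.acc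

/-- An ω-language is ω-regular if it is recognized by some NBA. -/
def OmegaRegular {α : Type*} (L : Set (ℕ → α)) : Prop :=
  ∃ A : NBA α, ∀ w, w ∈ L ↔ A.Accepts w

/-- Ultimately periodic ω-words. -/
def IsUP {α : Type*} (w : ℕ → α) : Prop :=
  ∃ (u v : List α) (h : 0 < v.length), w = finCat u (repWord v h)

section Aux

lemma infinite_fiber {C : Type*} [Finite C] {S : Set ℕ} (hS : S.Infinite) (f : ℕ → C) :
    ∃ c, {n | n ∈ S ∧ f n = c}.Infinite := by
  by_contra h
  push_neg at h
  have : S.Finite := by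
    have : S ⊆ ⋃ c, {n | n ∈ S ∧ f n = c} := fun n hn => Set.mem_iUnion.2 ⟨f n, hn, rfl⟩
    exact (Set.finite_iUnion fun c => h c).subset this
  exact hS this

lemma ramsey_step {C : Type*} [Finite C] (f : ℕ → ℕ → C) (T : Set ℕ) (hT : T.Infinite) :
    ∃ (x : ℕ) (c : C) (T' : Set ℕ), x ∈ T ∧ T' ⊆ T ∧ T'.Infinite ∧
      (∀ n ∈ T', x < n ∧ f x n = c) := by
  obtain ⟨x, hx⟩ := hT.nonempty
  have hT' : (T \ Set.Iic x).Infinite := hT.diff (Set.finite_Iic x)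
  obtain ⟨c, hc⟩ := infinite_fiber hT' (f x)
  refine ⟨x, c, _, hx, ?_, hc, ?_⟩
  · exact fun n hn => hn.1.1
  · rintro n ⟨⟨-, hn2⟩, hn3⟩
    exact ⟨by simpa using hn2, hn3⟩

lemma ramsey_pairs {C : Type*} [Finite C] (f : ℕ → ℕ → C) :
    ∃ g : ℕ → ℕ, StrictMono g ∧ ∃ c, ∀ k l, k < l → f (g k) (g l) = c := by
  classical
  have step : ∀ T : {T : Set ℕ // T.Infinite}, ∃ (x : ℕ) (c : C) (T' : {T : Set ℕ // T.Infinite}),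
      x ∈ T.1 ∧ T'.1 ⊆ T.1 ∧ ∀ n ∈ T'.1, x < n ∧ f x n = c := by
    rintro ⟨T, hT⟩
    obtain ⟨x, c, T', hxT, hsub, hT'inf, hT'⟩ := ramsey_step f T hT
    exact ⟨x, c, ⟨T', hT'inf⟩, hxT, hsub, hT'⟩
  choose pt col nxt hptmem hsub hprop using step
  let chain : ℕ → {T : Set ℕ // T.Infinite} := fun n =>
    Nat.rec ⟨Set.univ, Set.infinite_univ⟩ (fun _ p => nxt p) n
  have hchain_succ : ∀ k, chain (k + 1) = nxt (chain k) := fun _ => rfl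
  set x : ℕ → ℕ := fun k => pt (chain k) with hxdef
  set c : ℕ → C := fun k => col (chain k) with hcdef
  have hchain_mono : ∀ k l, k ≤ l → (chain l).1 ⊆ (chain k).1 := by
    intro k l hkl
    induction l with
    | zero => simp_all
    | succ l ih =>
      rcases Nat.eq_or_lt_of_le hkl with h | h
      · subst h; exact fun _ h => h
      · exact fun n hn => ih (Nat.lt_succ_iff.mp h) (hsub (chain l) hn)
  have hmem : ∀ k l, k < l → x l ∈ (chain (k + 1)).1 :=
    fun k l hkl => hchain_mono (k + 1) l hkl (hptmem (chain l))
  have hkey : ∀ k l, k < l → x k < x l ∧ f (x k) (x l) = c k :=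
    fun k l hkl => hprop (chain k) (x l) (hmem k l hkl)
  obtain ⟨c₀, hc₀⟩ := infinite_fiber (S := Set.univ) Set.infinite_univ c
  have hc₀' : {n | c n = c₀}.Infinite := by simpa using hc₀
  refine ⟨fun m => x (Nat.nth (fun n => c n = c₀) m), ?_, c₀, ?_⟩
  · have hxm : StrictMono x := strictMono_nat_of_lt_succ fun k => (hkey k (k+1) (Nat.lt_succ_self k)).1
    exact hxm.comp (Nat.nth_strictMono hc₀')
  · intro k l hkl
    have hlt : Nat.nth (fun n => c n = c₀) k < Nat.nth (fun n => c n = c₀) l :=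
      Nat.nth_strictMono hc₀' hkl
    rw [(hkey _ _ hlt).2]
    exact Nat.nth_mem_of_infinite hc₀' k

variable {α : Type*}

/-- The finite segment `w[i..j)` of an ω-word. -/
def seg (w : ℕ → α) (i j : ℕ) : List α := (List.range (j - i)).map fun k => w (i + k)

@[simp] lemma seg_length (w : ℕ → α) (i j : ℕ) : (seg w i j).length = j - i := by
  simp [seg]

lemma seg_getElem (w : ℕ → α) (i j n : ℕ) (h : n < (seg w i j).length) :
    (seg w i j)[n] = w (i + n) := by
  simp [seg]

lemma seg_cons (w : ℕ → α) (i j : ℕ) (h : i < j) :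
    seg w i j = w i :: seg w (i + 1) j := by
  have : j - i = (j - (i+1)) + 1 := by omega
  rw [seg, this, List.range_succ_eq_map]
  simp [seg, Function.comp_def, Nat.add_assoc, Nat.add_comm 1]

lemma seg_append (w : ℕ → α) (i j k : ℕ) (hij : i ≤ j) (hjk : j ≤ k) :
    seg w i j ++ seg w j k = seg w i k := by
  apply List.ext_getElem
  · simp; omega
  · intro n h1 h2
    rcases lt_or_ge n (j - i) with h | h
    · rw [List.getElem_append_left (by simpa using h)]
      rw [seg_getElem, seg_getElem]
    · rw [List.getElem_append_right (by simpa using h)]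
      rw [seg_getElem, seg_getElem]
      congr 1
      simp only [seg_length]
      omega

namespace NBA

variable (A : NBA α)

def Reach : List α → A.Q → A.Q → Prop
  | [], p, q => p = q
  | a :: x, p, q => ∃ r, r ∈ A.trans p a ∧ Reach x r q

def ReachAcc : List α → A.Q → A.Q → Prop
  | [], _, _ => False
  | a :: x, p, q => ∃ r, r ∈ A.trans p a ∧
      (((p, a, r) ∈ A.acc ∧ A.Reach x r q) ∨ ReachAcc x r q)

lemma reach_append (x y : List α) (p q : A.Q) :
    A.Reach (x ++ y) p q ↔ ∃ r, A.Reach x p r ∧ A.Reach y r q := by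
  induction x generalizing p with
  | nil => simp [Reach]
  | cons a x ih =>
    simp only [List.cons_append, Reach, List.append_eq, ih]
    constructor
    · rintro ⟨r, hr, s, hs1, hs2⟩; exact ⟨s, ⟨r, hr, hs1⟩, hs2⟩
    · rintro ⟨s, ⟨r, hr, hs1⟩, hs2⟩; exact ⟨r, hr, s, hs1, hs2⟩

lemma reachAcc_append (x y : List α) (p q : A.Q) :
    A.ReachAcc (x ++ y) p q ↔
      ∃ r, (A.ReachAcc x p r ∧ A.Reach y r q) ∨ (A.Reach x p r ∧ A.ReachAcc y r q) := by
  induction x generalizing p with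
  | nil => simp [Reach, ReachAcc]
  | cons a x ih =>
    simp only [List.cons_append, ReachAcc, List.append_eq, ih, reach_append, Reach]
    constructor
    · rintro ⟨r, hr, (⟨hacc, s, hs1, hs2⟩ | ⟨s, (⟨h1, h2⟩ | ⟨h1, h2⟩)⟩)⟩
      · exact ⟨s, Or.inl ⟨⟨r, hr, Or.inl ⟨hacc, hs1⟩⟩, hs2⟩⟩
      · exact ⟨s, Or.inl ⟨⟨r, hr, Or.inr h1⟩, h2⟩⟩
      · exact ⟨s, Or.inr ⟨⟨r, hr, h1⟩, h2⟩⟩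
    · rintro ⟨s, (⟨⟨r, hr, (⟨hacc, h1⟩ | h1)⟩, h2⟩ | ⟨⟨r, hr, h1⟩, h2⟩)⟩
      · exact ⟨r, hr, Or.inl ⟨hacc, s, h1, h2⟩⟩
      · exact ⟨r, hr, Or.inr ⟨s, Or.inl ⟨h1, h2⟩⟩⟩
      · exact ⟨r, hr, Or.inr ⟨s, Or.inr ⟨h1, h2⟩⟩⟩

lemma reach_of_reachAcc {x : List α} {p q : A.Q} (h : A.ReachAcc x p q) : A.Reach x p q := by
  induction x generalizing p with
  | nil => exact absurd h (by simp [ReachAcc])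
  | cons a x ih =>
    obtain ⟨r, hr, (⟨_, h1⟩ | h1)⟩ := h
    · exact ⟨r, hr, h1⟩
    · exact ⟨r, hr, ih h1⟩

/-- A run of an ω-word reaches along any segment. -/
lemma reach_of_run {w : ℕ → α} {ρ : ℕ → A.Q} (hρ : ∀ n, ρ (n + 1) ∈ A.trans (ρ n) (w n))
    {i j : ℕ} (hij : i ≤ j) : A.Reach (seg w i j) (ρ i) (ρ j) := by
  obtain ⟨d, rfl⟩ := Nat.exists_eq_add_of_le hij
  clear hij
  induction d generalizing i with
  | zero => simp [seg, Reach]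
  | succ d ih =>
    rw [seg_cons w i (i + (d+1)) (by omega)]
    exact ⟨ρ (i + 1), hρ i, by have := ih (i := i + 1); rwa [show i+1+d = i+(d+1) by omega] at this⟩

lemma reachAcc_of_run {w : ℕ → α} {ρ : ℕ → A.Q} (hρ : ∀ n, ρ (n + 1) ∈ A.trans (ρ n) (w n))
    {i j n : ℕ} (hin : i ≤ n) (hnj : n < j) (hacc : (ρ n, w n, ρ (n + 1)) ∈ A.acc) :
    A.ReachAcc (seg w i j) (ρ i) (ρ j) := by
  obtain ⟨d, rfl⟩ := Nat.exists_eq_add_of_le hin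
  clear hin
  induction d generalizing i with
  | zero =>
    rw [seg_cons w i j (by omega)]
    simp only [Nat.add_zero] at hnj hacc ⊢
    exact ⟨ρ (i + 1), hρ i, Or.inl ⟨hacc, A.reach_of_run hρ (by omega)⟩⟩
  | succ d ih =>
    rw [seg_cons w i j (by omega)]
    refine ⟨ρ (i + 1), hρ i, Or.inr ?_⟩
    have h1 : i + 1 + d = i + (d + 1) := by omega
    exact ih (i := i + 1) (by omega) (by rw [h1]; exact hacc)

/-- From `Reach` extract an explicit finite run, together with an accepting position
if `ReachAcc` holds. -/
lemma exists_run_of_reach {x : List α} {p q : A.Q} (h : A.Reach x p q) :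
    ∃ f : ℕ → A.Q, f 0 = p ∧ f x.length = q ∧
      (∀ i (hi : i < x.length), f (i + 1) ∈ A.trans (f i) x[i]) := by
  induction x generalizing p with
  | nil =>
    exact ⟨fun _ => p, rfl, h.symm ▸ rfl, fun i hi => absurd hi (by simp)⟩
  | cons a x ih =>
    obtain ⟨r, hr, hrest⟩ := h
    obtain ⟨f, hf0, hflen, hft⟩ := ih hrest
    refine ⟨fun n => if n = 0 then p else f (n - 1), by simp, by simp [hflen], ?_⟩
    intro i hi
    match i with
    | 0 => simpa [hf0] using hr
    | (i+1) => simpa using hft i (by simpa using hi)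

lemma exists_run_of_reachAcc {x : List α} {p q : A.Q} (h : A.ReachAcc x p q) :
    ∃ f : ℕ → A.Q, f 0 = p ∧ f x.length = q ∧
      (∀ i (hi : i < x.length), f (i + 1) ∈ A.trans (f i) x[i]) ∧
      ∃ i, ∃ hi : i < x.length, (f i, x[i], f (i + 1)) ∈ A.acc := by
  induction x generalizing p with
  | nil => exact absurd h (by simp [ReachAcc])
  | cons a x ih =>
    obtain ⟨r, hr, (⟨hacc, hrest⟩ | hrest)⟩ := h
    · obtain ⟨f, hf0, hflen, hft⟩ := A.exists_run_of_reach hrest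
      refine ⟨fun n => if n = 0 then p else f (n - 1), by simp, by simp [hflen], ?_, ?_⟩
      · intro i hi
        match i with
        | 0 => simpa [hf0] using hr
        | (i+1) => simpa using hft i (by simpa using hi)
      · exact ⟨0, by simp, by simpa [hf0] using hacc⟩
    · obtain ⟨f, hf0, hflen, hft, i, hi, hia⟩ := ih hrest
      refine ⟨fun n => if n = 0 then p else f (n - 1), by simp, by simp [hflen], ?_, ?_⟩
      · intro i hi
        match i with
        | 0 => simpa [hf0] using hr
        | (i+1) => simpa using hft i (by simpa using hi)
      · exact ⟨i + 1, by simpa using hi, by simpa using hia⟩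

end NBA

open Classical in
/-- The index `k` such that `σ k ≤ n < σ (k+1)`, for a strictly monotone `σ` with `σ 0 = 0`. -/
noncomputable def idx (σ : ℕ → ℕ) (n : ℕ) : ℕ := Nat.findGreatest (fun k => σ k ≤ n) n

open Classical in
lemma idx_spec {σ : ℕ → ℕ} (hσ : StrictMono σ) (h0 : σ 0 = 0) (n : ℕ) :
    σ (idx σ n) ≤ n ∧ n < σ (idx σ n + 1) := by
  have h1 : σ (idx σ n) ≤ n :=
    Nat.findGreatest_spec (P := fun k => σ k ≤ n) (Nat.zero_le n) (by omega)
  refine ⟨h1, ?_⟩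
  by_contra h
  push_neg at h
  have h2 : idx σ n + 1 ≤ n := le_trans hσ.le_apply h
  have h3 := Nat.le_findGreatest (P := fun k => σ k ≤ n) (m := idx σ n + 1) h2 h
  exact absurd h3 (by unfold idx; omega)

lemma idx_eq {σ : ℕ → ℕ} (hσ : StrictMono σ) (h0 : σ 0 = 0) {n k : ℕ}
    (h1 : σ k ≤ n) (h2 : n < σ (k + 1)) : idx σ n = k := by
  obtain ⟨h3, h4⟩ := idx_spec hσ h0 n
  rcases lt_trichotomy (idx σ n) k with h | h | h
  · have : σ (idx σ n + 1) ≤ σ k := hσ.monotone (by omega)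
    omega
  · exact h
  · have : σ (k + 1) ≤ σ (idx σ n) := hσ.monotone (by omega)
    omega

namespace NBA
variable {α : Type*} (A : NBA α)

/-- The transfer lemma: if two ω-words have factorizations into segments with
matching reachability profiles, acceptance transfers. -/
lemma accepts_transfer (w w' : ℕ → α) (σ τ : ℕ → ℕ)
    (hσ : StrictMono σ) (hτ : StrictMono τ) (hσ0 : σ 0 = 0) (hτ0 : τ 0 = 0)
    (hR : ∀ k p q, A.Reach (seg w (σ k) (σ (k+1))) p q → A.Reach (seg w' (τ k) (τ (k+1))) p q)
    (hA : ∀ k p q, A.ReachAcc (seg w (σ k) (σ (k+1))) p q →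
      A.ReachAcc (seg w' (τ k) (τ (k+1))) p q)
    (hacc : A.Accepts w) : A.Accepts w' := by
  classical
  obtain ⟨ρ, hρ0, hρt, hρa⟩ := hacc
  set p : ℕ → A.Q := fun k => ρ (σ k) with hp
  set Flag : ℕ → Prop := fun k => ∃ n, σ k ≤ n ∧ n < σ (k+1) ∧ (ρ n, w n, ρ (n + 1)) ∈ A.acc
    with hFlag
  -- for each k, a run of w' over the k-th segment from p k to p (k+1)
  have hseg : ∀ k, ∃ f : ℕ → A.Q, f 0 = p k ∧ f (τ (k+1) - τ k) = p (k+1) ∧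
      (∀ i, i < τ (k+1) - τ k → f (i + 1) ∈ A.trans (f i) (w' (τ k + i))) ∧
      (Flag k → ∃ i, i < τ (k+1) - τ k ∧ (f i, w' (τ k + i), f (i + 1)) ∈ A.acc) := by
    intro k
    by_cases hk : Flag k
    · obtain ⟨n, hn1, hn2, hn3⟩ := hk
      have h1 : A.ReachAcc (seg w' (τ k) (τ (k+1))) (p k) (p (k+1)) :=
        hA k _ _ (A.reachAcc_of_run hρt hn1 hn2 hn3)
      obtain ⟨f, hf0, hflen, hft, i, hi, hia⟩ := A.exists_run_of_reachAcc h1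
      rw [seg_length] at hflen hi
      refine ⟨f, hf0, hflen, ?_, fun _ => ⟨i, hi, ?_⟩⟩
      · intro j hj
        have := hft j (by rw [seg_length]; omega)
        rwa [seg_getElem] at this
      · rwa [seg_getElem] at hia
    · have h1 : A.Reach (seg w' (τ k) (τ (k+1))) (p k) (p (k+1)) :=
        hR k _ _ (A.reach_of_run hρt (hσ.monotone (by omega)))
      obtain ⟨f, hf0, hflen, hft⟩ := A.exists_run_of_reach h1
      rw [seg_length] at hflen
      refine ⟨f, hf0, hflen, ?_, fun h => absurd h hk⟩
      intro j hj
      have := hft j (by rw [seg_length]; omega)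
      rwa [seg_getElem] at this
  choose f hf0 hflen hft hfacc using hseg
  -- glue the runs
  set ρ' : ℕ → A.Q := fun n => f (idx τ n) (n - τ (idx τ n)) with hρ'
  have hidx : ∀ n, τ (idx τ n) ≤ n ∧ n < τ (idx τ n + 1) := idx_spec hτ hτ0
  have key : ∀ n, ρ' (n + 1) = f (idx τ n) (n - τ (idx τ n) + 1) := by
    intro n
    obtain ⟨h1, h2⟩ := hidx n
    rcases lt_or_ge (n + 1) (τ (idx τ n + 1)) with h | h
    · have he : idx τ (n + 1) = idx τ n := idx_eq hτ hτ0 (by omega) h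
      show f (idx τ (n+1)) (n + 1 - τ (idx τ (n+1))) = _
      rw [he]
      congr 1
      omega
    · have heq : n + 1 = τ (idx τ n + 1) := by omega
      have he : idx τ (n + 1) = idx τ n + 1 :=
        idx_eq hτ hτ0 (by omega) (by rw [heq]; exact hτ (by omega))
      show f (idx τ (n+1)) (n + 1 - τ (idx τ (n+1))) = _
      rw [he, show n + 1 - τ (idx τ n + 1) = 0 by omega, hf0,
        show n - τ (idx τ n) + 1 = τ (idx τ n + 1) - τ (idx τ n) by omega, hflen]
  refine ⟨ρ', ?_, ?_, ?_⟩
  · have h0 : idx τ 0 = 0 :=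
      idx_eq hτ hτ0 hτ0.le (by simpa [hτ0] using hτ (Nat.zero_lt_one))
    simp only [hρ', h0, hτ0, Nat.sub_zero, hf0, hp, hσ0, hρ0]
  · intro n
    obtain ⟨h1, h2⟩ := hidx n
    rw [key n]
    have := hft (idx τ n) (n - τ (idx τ n)) (by omega)
    rwa [show τ (idx τ n) + (n - τ (idx τ n)) = n by omega] at this
  · intro N
    -- find a flagged segment k with k ≥ N
    have hflag : ∃ k, N ≤ k ∧ Flag k := by
      obtain ⟨n, hn1, hn2⟩ := hρa (σ N)
      obtain ⟨g1, g2⟩ := idx_spec hσ hσ0 n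
      refine ⟨idx σ n, ?_, n, g1, g2, hn2⟩
      by_contra h
      push_neg at h
      have : σ (idx σ n + 1) ≤ σ N := hσ.monotone (by omega)
      omega
    obtain ⟨k, hkN, hkF⟩ := hflag
    obtain ⟨i, hi1, hi2⟩ := hfacc k hkF
    have hτk : τ k ≤ τ (k + 1) := hτ.monotone (by omega)
    refine ⟨τ k + i, le_trans (le_trans hkN hτ.le_apply) (by omega), ?_⟩
    have hik : idx τ (τ k + i) = k := idx_eq hτ hτ0 (by omega) (by omega)
    have e1 : ρ' (τ k + i) = f k i := by
      show f (idx τ (τ k + i)) (τ k + i - τ (idx τ (τ k + i))) = _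
      rw [hik]
      congr 1
      omega
    have e2 : ρ' (τ k + i + 1) = f k (i + 1) := by
      rw [key, hik]
      congr 1
      omega
    rw [e1, e2]
    exact hi2

end NBA

section Words
variable {α : Type*}

lemma finCat_add (u : List α) (r : ℕ → α) (m : ℕ) : finCat u r (u.length + m) = r m := by
  simp only [finCat]
  rw [dif_neg (by omega)]
  congr 1
  omega

lemma finCat_append (u v : List α) (r : ℕ → α) :
    finCat (u ++ v) r = finCat u (finCat v r) := by
  funext n
  simp only [finCat, List.length_append]
  rcases lt_or_ge n u.length with h | h
  · conv_lhs => rw [dif_pos (by omega : n < u.length + v.length)]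
    conv_rhs => rw [dif_pos h]
    exact List.getElem_append_left h
  · conv_rhs => rw [dif_neg (not_lt.mpr h)]
    rcases lt_or_ge n (u.length + v.length) with h2 | h2
    · conv_lhs => rw [dif_pos h2]
      conv_rhs => rw [dif_pos (by omega : n - u.length < v.length)]
      exact List.getElem_append_right h
    · conv_lhs => rw [dif_neg (not_lt.mpr h2)]
      conv_rhs => rw [dif_neg (by omega : ¬(n - u.length < v.length))]
      congr 1
      omega

lemma repWord_fix (v : List α) (hv : 0 < v.length) :
    finCat v (repWord v hv) = repWord v hv := by
  funext n
  simp only [finCat, repWord]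
  rcases lt_or_ge n v.length with h | h
  · rw [dif_pos h]
    congr 1
    exact Fin.ext (Nat.mod_eq_of_lt h).symm
  · rw [dif_neg (not_lt.mpr h)]
    congr 1
    exact Fin.ext (Nat.mod_eq_sub_mod h).symm

lemma seg_finCat (x : List α) (r : ℕ → α) : seg (finCat x r) 0 x.length = x := by
  apply List.ext_getElem
  · simp
  · intro n h1 h2
    rw [seg_getElem]
    simp only [Nat.zero_add, finCat]
    rw [dif_pos h2]
    rfl

end Words

namespace NBA
variable {α : Type*} (A : NBA α)

/-- The reachability profile of a finite word. -/
def Prof (x : List α) : A.Q × A.Q → Prop × Prop :=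
  fun pq => (A.Reach x pq.1 pq.2, A.ReachAcc x pq.1 pq.2)

lemma prof_congr {x y : List α} (h : A.Prof x = A.Prof y) (p q : A.Q) :
    (A.Reach x p q ↔ A.Reach y p q) ∧ (A.ReachAcc x p q ↔ A.ReachAcc y p q) := by
  have := congrFun h (p, q)
  simp only [Prof, Prod.mk.injEq, eq_iff_iff] at this
  exact this

/-- The pumping lemma: if all the Ramsey segments of `w` have the same profile, then
`w` is accepted iff the corresponding ultimately periodic word is. -/
lemma accepts_pump (w : ℕ → α) (g : ℕ → ℕ) (hg : StrictMono g)
    (hv : 0 < (seg w (g 0) (g 1)).length)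
    (hsame : ∀ k, A.Prof (seg w (g k) (g (k+1))) = A.Prof (seg w (g 0) (g 1))) :
    (A.Accepts w ↔ A.Accepts (finCat (seg w 0 (g 0)) (repWord (seg w (g 0) (g 1)) hv))) := by
  set u := seg w 0 (g 0) with hu
  set v := seg w (g 0) (g 1) with hvdef
  set w' := finCat u (repWord v hv) with hw'
  have hul : u.length = g 0 := by rw [hu, seg_length]; omega
  have hvl : v.length = g 1 - g 0 := by rw [hvdef, seg_length]
  have hg01 : g 0 < g 1 := hg (by omega)
  set σ : ℕ → ℕ := fun k => if k = 0 then 0 else g k with hσdef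
  set τ : ℕ → ℕ := fun k => if k = 0 then 0 else u.length + k * v.length with hτdef
  have hσ : StrictMono σ := by
    apply strictMono_nat_of_lt_succ
    intro n
    match n with
    | 0 => simp only [hσdef]; simp; omega
    | (n+1) => simp only [hσdef]; simp; exact hg (by omega)
  have hτ : StrictMono τ := by
    apply strictMono_nat_of_lt_succ
    intro n
    match n with
    | 0 => simp only [hτdef]; simp; omega
    | (n+1) =>
      simp only [hτdef, if_neg (Nat.succ_ne_zero n), if_neg (Nat.succ_ne_zero (n+1))]
      have h1 : (n+1+1) * v.length = (n+1) * v.length + v.length := by ring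
      omega
  have hσ0 : σ 0 = 0 := by simp [hσdef]
  have hτ0 : τ 0 = 0 := by simp [hτdef]
  -- segment identifications
  have hw'2 : w' = finCat (u ++ v) (repWord v hv) := by
    rw [hw', finCat_append, repWord_fix]
  have hseg0τ : seg w' (τ 0) (τ 1) = u ++ v := by
    have h1 : τ 1 = (u ++ v).length := by simp [hτdef]
    rw [hτ0, h1, hw'2, seg_finCat]
  have hseg0σ : seg w (σ 0) (σ 1) = u ++ v := by
    have h0 : σ 0 = 0 := hσ0
    have h1 : σ 1 = g 1 := by simp [hσdef]
    rw [h0, h1, hu, hvdef, seg_append w 0 (g 0) (g 1) (by omega) (by omega)]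
  have hsegkτ : ∀ k, k ≠ 0 → seg w' (τ k) (τ (k+1)) = v := by
    intro k hk
    have ht1 : τ k = u.length + k * v.length := by simp [hτdef, hk]
    have ht2 : τ (k+1) = u.length + (k+1) * v.length := by simp [hτdef]
    have hmul : (k+1) * v.length = k * v.length + v.length := by ring
    apply List.ext_getElem
    · rw [seg_length, ht1, ht2]
      omega
    · intro n h1 h2
      rw [seg_getElem, ht1]
      rw [show u.length + k * v.length + n = u.length + (k * v.length + n) by omega,
        hw', finCat_add]
      simp only [repWord]
      have hn : n < v.length := h2
      congr 1
      apply Fin.ext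
      show (k * v.length + n) % v.length = n
      rw [Nat.add_comm, Nat.add_mul_mod_self_right]
      exact Nat.mod_eq_of_lt hn
  have hsegkσ : ∀ k, k ≠ 0 → seg w (σ k) (σ (k+1)) = seg w (g k) (g (k+1)) := by
    intro k hk
    simp [hσdef, hk]
  have hprof : ∀ k p q,
      (A.Reach (seg w (σ k) (σ (k+1))) p q ↔ A.Reach (seg w' (τ k) (τ (k+1))) p q) ∧
      (A.ReachAcc (seg w (σ k) (σ (k+1))) p q ↔ A.ReachAcc (seg w' (τ k) (τ (k+1))) p q) := by
    intro k p q
    by_cases hk : k = 0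
    · subst hk
      rw [hseg0τ, hseg0σ]
      exact ⟨Iff.rfl, Iff.rfl⟩
    · rw [hsegkτ k hk, hsegkσ k hk]
      exact A.prof_congr (hsame k) p q
  constructor
  · intro h
    exact A.accepts_transfer w w' σ τ hσ hτ hσ0 hτ0
      (fun k p q hr => ((hprof k p q).1).mp hr)
      (fun k p q hr => ((hprof k p q).2).mp hr) h
  · intro h
    exact A.accepts_transfer w' w τ σ hτ hσ hτ0 hσ0
      (fun k p q hr => ((hprof k p q).1).mpr hr)
      (fun k p q hr => ((hprof k p q).2).mpr hr) h

end NBA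

end Aux

/-- One-sided version of the main theorem. -/
lemma mem_of_UP_imp {α : Type*} {L₁ L₂ : Set (ℕ → α)}
    (h₁ : OmegaRegular L₁) (h₂ : OmegaRegular L₂)
    (hUP : ∀ w', IsUP w' → w' ∈ L₁ → w' ∈ L₂) {w : ℕ → α} (hw : w ∈ L₁) : w ∈ L₂ := by
  obtain ⟨A₁, hA₁⟩ := h₁
  obtain ⟨A₂, hA₂⟩ := h₂
  haveI := A₁.fin
  haveI := A₂.fin
  -- Ramsey coloring by profiles in both automata
  obtain ⟨g, hg, c, hc⟩ := ramsey_pairs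
    (fun i j => (A₁.Prof (seg w i j), A₂.Prof (seg w i j)))
  have hsame1 : ∀ k, A₁.Prof (seg w (g k) (g (k+1))) = A₁.Prof (seg w (g 0) (g 1)) := by
    intro k
    have e1 := hc k (k+1) (by omega)
    have e2 := hc 0 1 (by omega)
    exact (congrArg Prod.fst e1).trans (congrArg Prod.fst e2).symm
  have hsame2 : ∀ k, A₂.Prof (seg w (g k) (g (k+1))) = A₂.Prof (seg w (g 0) (g 1)) := by
    intro k
    have e1 := hc k (k+1) (by omega)
    have e2 := hc 0 1 (by omega)
    exact (congrArg Prod.snd e1).trans (congrArg Prod.snd e2).symm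
  have hv : 0 < (seg w (g 0) (g 1)).length := by
    rw [seg_length]
    have := hg (show 0 < 1 by omega)
    omega
  set w' := finCat (seg w 0 (g 0)) (repWord (seg w (g 0) (g 1)) hv) with hw'
  have hUPw' : IsUP w' := ⟨_, _, hv, rfl⟩
  have hiff1 : A₁.Accepts w ↔ A₁.Accepts w' := A₁.accepts_pump w g hg hv hsame1
  have hiff2 : A₂.Accepts w ↔ A₂.Accepts w' := A₂.accepts_pump w g hg hv hsame2
  have hw'L₁ : w' ∈ L₁ := (hA₁ w').mpr (hiff1.mp ((hA₁ w).mp hw))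
  have hw'L₂ : w' ∈ L₂ := hUP w' hUPw' hw'L₁
  exact (hA₂ w).mpr (hiff2.mpr ((hA₂ w').mp hw'L₂))

theorem omegaRegular_eq_of_UP_eq {α : Type*} [Fintype α] (L₁ L₂ : Set (ℕ → α))
    (h₁ : OmegaRegular L₁) (h₂ : OmegaRegular L₂)
    (hUP : {w ∈ L₁ | IsUP w} = {w ∈ L₂ | IsUP w}) : L₁ = L₂ := by
  have h12 : ∀ w', IsUP w' → w' ∈ L₁ → w' ∈ L₂ := by
    intro w' hup hmem
    have : w' ∈ {w ∈ L₂ | IsUP w} := hUP ▸ ⟨hmem, hup⟩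
    exact this.1
  have h21 : ∀ w', IsUP w' → w' ∈ L₂ → w' ∈ L₁ := by
    intro w' hup hmem
    have : w' ∈ {w ∈ L₁ | IsUP w} := hUP.symm ▸ ⟨hmem, hup⟩
    exact this.1
  ext w
  exact ⟨fun hw => mem_of_UP_imp h₁ h₂ h12 hw, fun hw => mem_of_UP_imp h₂ h₁ h21 hw⟩
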